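/- If G is a persistent graph on {1,...,n}, then the graph G' obtained from G by adding two new vertices 0 and n+1, each adjacent to every other vertex (including each other), is a persistent graph on the ordered vertex set {0,1,...,n+1}. -/

import Mathlib

/-- A graph on the ordered vertex set `Fin n` (representing `{1,…,n}`) is *persistent* if it
contains the Hamilton path `1,…,n`, satisfies the X-property and the bar-property. -/
def IsPersistent {n : ℕ} (G : SimpleGraph (Fin n)) : Prop :=
  (∀ i j : Fin n, (i : ℕ) + 1 = (j : ℕ) → G.Adj i j) ∧
  (∀ a b c d : Fin n, a < b → b < c → c < d → G.Adj a c → G.Adj b d → G.Adj a d) ∧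
  (∀ a b : Fin n, (a : ℕ) + 1 < (b : ℕ) → G.Adj a b →
    ∃ x : Fin n, a < x ∧ x < b ∧ G.Adj a x ∧ G.Adj x b)

/-- The extension `Ĝ` of `G` by two universal vertices `0` and `n+1`.  Vertices of `G`
(elements of `Fin n`, representing `1,…,n`) are embedded into `Fin (n+2)` via `v ↦ v+1`. -/
def extendGraph (n : ℕ) (G : SimpleGraph (Fin n)) : SimpleGraph (Fin (n + 2)) where
  Adj u v := u ≠ v ∧ ((u : ℕ) = 0 ∨ (u : ℕ) = n + 1 ∨ (v : ℕ) = 0 ∨ (v : ℕ) = n + 1 ∨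
    ∃ a b : Fin n, G.Adj a b ∧
      (((a : ℕ) + 1 = (u : ℕ) ∧ (b : ℕ) + 1 = (v : ℕ)) ∨
       ((a : ℕ) + 1 = (v : ℕ) ∧ (b : ℕ) + 1 = (u : ℕ))))
  symm := by
    constructor
    rintro u v ⟨h1, h2⟩
    refine ⟨h1.symm, ?_⟩
    rcases h2 with h | h | h | h | ⟨a, b, hab, hc⟩
    · tauto
    · tauto
    · tauto
    · tauto
    · exact Or.inr (Or.inr (Or.inr (Or.inr ⟨b, a, hab.symm, by tauto⟩)))
  loopless := by constructor; rintro u ⟨h, _⟩; exact h rfl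

/-- the extension of a persistent graph by the two universal vertices `0` and
`n+1` is again persistent (on the ordered vertex set `{0,1,…,n+1}`). -/
theorem extend_persistent {n : ℕ} (G : SimpleGraph (Fin n)) (hG : IsPersistent G) :
    IsPersistent (extendGraph n G) := by
  obtain ⟨hH, hX, hB⟩ := hG
  refine ⟨?_, ?_, ?_⟩
  · -- Hamilton path
    intro i j hij
    have hne : i ≠ j := by
      intro h; subst h; omega
    refine ⟨hne, ?_⟩
    by_cases hi0 : (i : ℕ) = 0
    · exact Or.inl hi0
    by_cases hjn : (j : ℕ) = n + 1
    · exact Or.inr (Or.inr (Or.inr (Or.inl hjn)))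
    · have hi := i.isLt
      have hj := j.isLt
      refine Or.inr (Or.inr (Or.inr (Or.inr
        ⟨⟨(i : ℕ) - 1, by omega⟩, ⟨(j : ℕ) - 1, by omega⟩, ?_, Or.inl ⟨by simp; omega, by simp; omega⟩⟩)))
      exact hH _ _ (by simp; omega)
  · -- X property
    intro a b c d hab hbc hcd hac hbd
    have hab' : (a : ℕ) < b := hab
    have hbc' : (b : ℕ) < c := hbc
    have hcd' : (c : ℕ) < d := hcd
    have hne : a ≠ d := by
      intro h; rw [h] at hab'; omega
    refine ⟨hne, ?_⟩
    by_cases ha0 : (a : ℕ) = 0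
    · exact Or.inl ha0
    by_cases hdn : (d : ℕ) = n + 1
    · exact Or.inr (Or.inr (Or.inr (Or.inl hdn)))
    have hd := d.isLt
    -- all four are interior vertices
    obtain ⟨-, hac'⟩ := hac
    obtain ⟨-, hbd'⟩ := hbd
    rcases hac' with h | h | h | h | ⟨a1, c1, hG1, hc1⟩
    · omega
    · omega
    · omega
    · omega
    rcases hbd' with h | h | h | h | ⟨b1, d1, hG2, hc2⟩
    · omega
    · omega
    · omega
    · omega
    have hAn : (a : ℕ) - 1 < n := by omega
    have hBn : (b : ℕ) - 1 < n := by omega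
    have hCn : (c : ℕ) - 1 < n := by omega
    have hDn : (d : ℕ) - 1 < n := by omega
    set A : Fin n := ⟨(a : ℕ) - 1, hAn⟩
    set B : Fin n := ⟨(b : ℕ) - 1, hBn⟩
    set C : Fin n := ⟨(c : ℕ) - 1, hCn⟩
    set D : Fin n := ⟨(d : ℕ) - 1, hDn⟩
    have hGAC : G.Adj A C := by
      rcases hc1 with ⟨h1, h2⟩ | ⟨h1, h2⟩
      · have e1 : a1 = A := Fin.ext (by simp [A]; omega)
        have e2 : c1 = C := Fin.ext (by simp [C]; omega)
        rwa [e1, e2] at hG1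
      · have e1 : a1 = C := Fin.ext (by simp [C]; omega)
        have e2 : c1 = A := Fin.ext (by simp [A]; omega)
        rw [e1, e2] at hG1
        exact hG1.symm
    have hGBD : G.Adj B D := by
      rcases hc2 with ⟨h1, h2⟩ | ⟨h1, h2⟩
      · have e1 : b1 = B := Fin.ext (by simp [B]; omega)
        have e2 : d1 = D := Fin.ext (by simp [D]; omega)
        rwa [e1, e2] at hG2
      · have e1 : b1 = D := Fin.ext (by simp [D]; omega)
        have e2 : d1 = B := Fin.ext (by simp [B]; omega)
        rw [e1, e2] at hG2
        exact hG2.symm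
    have hGAD : G.Adj A D := by
      refine hX A B C D ?_ ?_ ?_ hGAC hGBD
      · show ((a : ℕ) - 1) < ((b : ℕ) - 1); omega
      · show ((b : ℕ) - 1) < ((c : ℕ) - 1); omega
      · show ((c : ℕ) - 1) < ((d : ℕ) - 1); omega
    exact Or.inr (Or.inr (Or.inr (Or.inr ⟨A, D, hGAD, Or.inl ⟨by simp [A]; omega, by simp [D]; omega⟩⟩)))
  · -- bar property
    intro a b hab hadj
    have hb := b.isLt
    by_cases ha0 : (a : ℕ) = 0
    · by_cases hbn : (b : ℕ) = n + 1
      · refine ⟨⟨1, by omega⟩, ?_, ?_, ?_, ?_⟩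
        · show (a : ℕ) < 1; omega
        · show 1 < (b : ℕ); omega
        · exact ⟨Fin.ne_of_val_ne (show (a : ℕ) ≠ 1 by omega), Or.inl ha0⟩
        · exact ⟨Fin.ne_of_val_ne (show (1 : ℕ) ≠ (b : ℕ) by omega),
            Or.inr (Or.inr (Or.inr (Or.inl hbn)))⟩
      · refine ⟨⟨(b : ℕ) - 1, by omega⟩, ?_, ?_, ?_, ?_⟩
        · show (a : ℕ) < (b : ℕ) - 1; omega
        · show (b : ℕ) - 1 < (b : ℕ); omega
        · exact ⟨Fin.ne_of_val_ne (show (a : ℕ) ≠ (b : ℕ) - 1 by omega), Or.inl ha0⟩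
        · refine ⟨Fin.ne_of_val_ne (show (b : ℕ) - 1 ≠ (b : ℕ) by omega),
            Or.inr (Or.inr (Or.inr (Or.inr ⟨⟨(b : ℕ) - 2, by omega⟩, ⟨(b : ℕ) - 1, by omega⟩,
              hH _ _ (show (b : ℕ) - 2 + 1 = (b : ℕ) - 1 by omega),
              Or.inl ⟨show (b : ℕ) - 2 + 1 = (b : ℕ) - 1 by omega,
                show (b : ℕ) - 1 + 1 = (b : ℕ) by omega⟩⟩)))⟩
    · by_cases hbn : (b : ℕ) = n + 1
      · refine ⟨⟨(a : ℕ) + 1, by omega⟩, ?_, ?_, ?_, ?_⟩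
        · show (a : ℕ) < (a : ℕ) + 1; omega
        · show (a : ℕ) + 1 < (b : ℕ); omega
        · refine ⟨Fin.ne_of_val_ne (show (a : ℕ) ≠ (a : ℕ) + 1 by omega),
            Or.inr (Or.inr (Or.inr (Or.inr ⟨⟨(a : ℕ) - 1, by omega⟩, ⟨(a : ℕ), by omega⟩,
              hH _ _ (show (a : ℕ) - 1 + 1 = (a : ℕ) by omega),
              Or.inl ⟨show (a : ℕ) - 1 + 1 = (a : ℕ) by omega, rfl⟩⟩)))⟩
        · exact ⟨Fin.ne_of_val_ne (show (a : ℕ) + 1 ≠ (b : ℕ) by omega),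
            Or.inr (Or.inr (Or.inr (Or.inl hbn)))⟩
      · -- both interior: use bar property of G
        obtain ⟨-, hadj'⟩ := hadj
        rcases hadj' with h | h | h | h | ⟨a1, b1, hG1, hc1⟩
        · omega
        · omega
        · omega
        · omega
        have hAn : (a : ℕ) - 1 < n := by omega
        have hBn : (b : ℕ) - 1 < n := by omega
        set A : Fin n := ⟨(a : ℕ) - 1, hAn⟩
        set B : Fin n := ⟨(b : ℕ) - 1, hBn⟩
        have hGAB : G.Adj A B := by
          rcases hc1 with ⟨h1, h2⟩ | ⟨h1, h2⟩
          · have e1 : a1 = A := Fin.ext (by simp [A]; omega)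
            have e2 : b1 = B := Fin.ext (by simp [B]; omega)
            rwa [e1, e2] at hG1
          · have e1 : a1 = B := Fin.ext (by simp [B]; omega)
            have e2 : b1 = A := Fin.ext (by simp [A]; omega)
            rw [e1, e2] at hG1
            exact hG1.symm
        obtain ⟨x, hAx, hxB, hadj1, hadj2⟩ := hB A B (by simp [A, B]; omega) hGAB
        have hAx' : (A : ℕ) < x := hAx
        have hxB' : (x : ℕ) < B := hxB
        have hx := x.isLt
        have hAx'' : (a : ℕ) - 1 < (x : ℕ) := hAx'
        have hxB'' : (x : ℕ) < (b : ℕ) - 1 := hxB'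
        refine ⟨⟨(x : ℕ) + 1, by omega⟩, ?_, ?_, ?_, ?_⟩
        · show (a : ℕ) < (x : ℕ) + 1; omega
        · show (x : ℕ) + 1 < (b : ℕ); omega
        · refine ⟨Fin.ne_of_val_ne (show (a : ℕ) ≠ (x : ℕ) + 1 by omega),
            Or.inr (Or.inr (Or.inr (Or.inr ⟨A, x, hadj1,
              Or.inl ⟨show (a : ℕ) - 1 + 1 = (a : ℕ) by omega, rfl⟩⟩)))⟩
        · refine ⟨Fin.ne_of_val_ne (show (x : ℕ) + 1 ≠ (b : ℕ) by omega),
            Or.inr (Or.inr (Or.inr (Or.inr ⟨x, B, hadj2,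
              Or.inl ⟨rfl, show (b : ℕ) - 1 + 1 = (b : ℕ) by omega⟩⟩)))⟩
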